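/- Every finitely generated commutative monoid P admits a coequalizer presentation: there exist natural numbers n₁, n₂ and monoid homomorphisms v₁, v₂ : ℕ^{n₂} → ℕ^{n₁} and a surjective homomorphism q : ℕ^{n₁} → P such that q is the coequalizer of v₁ and v₂ in the category of commutative monoids. -/

import Mathlib

open Finsupp

noncomputable abbrev R (n : ℕ) := AddMonoidAlgebra ℤ (Fin n → ℕ)

instance Rnoeth (n : ℕ) : IsNoetherianRing (R n) := by
  have e : (Fin n → ℕ) ≃+ (Fin n →₀ ℕ) := Finsupp.addEquivFunOnFinite.symm
  exact isNoetherianRing_of_ringEquiv (MvPolynomial (Fin n) ℤ)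
    (AddMonoidAlgebra.domCongr ℤ ℤ e).toRingEquiv.symm

noncomputable def Ic {n : ℕ} (c : AddCon (Fin n → ℕ)) : Ideal (R n) :=
  Ideal.span {x | ∃ a b, c a b ∧ x = AddMonoidAlgebra.single a 1 - AddMonoidAlgebra.single b 1}

theorem mem_Ic {n : ℕ} {c : AddCon (Fin n → ℕ)} {a b : Fin n → ℕ} (h : c a b) :
    (AddMonoidAlgebra.single a 1 - AddMonoidAlgebra.single b 1 : R n) ∈ Ic c :=
  Ideal.subset_span ⟨a, b, h, rfl⟩

theorem Ic_reflect {n : ℕ} {c : AddCon (Fin n → ℕ)} {a b : Fin n → ℕ}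
    (h : (AddMonoidAlgebra.single a 1 - AddMonoidAlgebra.single b 1 : R n) ∈ Ic c) : c a b := by
  set π := AddMonoidAlgebra.mapDomainRingHom ℤ c.mk' with hπ
  have hπs : ∀ (x : Fin n → ℕ), π (AddMonoidAlgebra.single x 1) = AddMonoidAlgebra.single (c.mk' x) (1 : ℤ) := by
    intro x
    simp [hπ, AddMonoidAlgebra.mapDomainRingHom, AddMonoidAlgebra.mapDomain_single]
  have hker : Ic c ≤ RingHom.ker π := by
    rw [Ic, Ideal.span_le]
    rintro x ⟨a, b, hab, rfl⟩
    have : c.mk' a = c.mk' b := (AddCon.eq c).2 hab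
    simp [SetLike.mem_coe, RingHom.mem_ker, map_sub, hπs, this]
  have h0 : π (AddMonoidAlgebra.single a 1 - AddMonoidAlgebra.single b 1) = 0 := hker h
  rw [map_sub, hπs, hπs, sub_eq_zero] at h0
  have := AddMonoidAlgebra.single_inj.1 h0
  rcases this with ⟨h1, -⟩ | ⟨h1, -⟩
  · exact (AddCon.eq c).1 h1
  · exact absurd h1 one_ne_zero

theorem Ic_strictMono {n : ℕ} : StrictMono (Ic (n := n)) := by
  intro c d hcd
  have hle : Ic c ≤ Ic d := Ideal.span_mono (by rintro x ⟨a, b, hab, rfl⟩; exact ⟨a, b, hcd.le hab, rfl⟩)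
  refine lt_of_le_of_ne hle ?_
  intro heq
  refine hcd.ne (le_antisymm hcd.le fun a b hdab => ?_)
  exact Ic_reflect (heq ▸ mem_Ic hdab)

instance addConWF (n : ℕ) : WellFoundedGT (AddCon (Fin n → ℕ)) :=
  Ic_strictMono.wellFoundedGT

/-- every congruence on ℕ^n is finitely generated -/
theorem addCon_fg {n : ℕ} (c : AddCon (Fin n → ℕ)) :
    ∃ s : Finset ((Fin n → ℕ) × (Fin n → ℕ)),
      addConGen (fun a b => (a, b) ∈ s) = c := by
  set T : Set (AddCon (Fin n → ℕ)) :=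
    {d | d ≤ c ∧ ∃ s : Finset ((Fin n → ℕ) × (Fin n → ℕ)), addConGen (fun a b => (a, b) ∈ s) = d}
  have hbot : (⊥ : AddCon (Fin n → ℕ)) ∈ T := by
    refine ⟨bot_le, ∅, le_antisymm (AddCon.addConGen_le.2 ?_) bot_le⟩
    intro x y h; simp at h
  obtain ⟨m, hmT, hmax⟩ := (addConWF n).wf.has_min T ⟨_, hbot⟩
  obtain ⟨hmc, s, hs⟩ := hmT
  refine ⟨s, ?_⟩
  rw [hs]
  by_contra hne
  have hlt : m < c := lt_of_le_of_ne hmc hne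
  obtain ⟨⟨a, b⟩, hab⟩ : ∃ p : (Fin n → ℕ) × (Fin n → ℕ), c p.1 p.2 ∧ ¬ m p.1 p.2 := by
    by_contra h
    push_neg at h
    exact hne (le_antisymm hmc (AddCon.le_def.2 fun {x y} hxy => h (x, y) hxy))
  set m' := addConGen (fun x y => (x, y) ∈ insert (a, b) s)
  have hm'T : m' ∈ T := by
    refine ⟨AddCon.addConGen_le.2 ?_, insert (a, b) s, rfl⟩
    intro x y hxy
    rcases Finset.mem_insert.1 hxy with h | h
    · obtain ⟨h1, h2⟩ := Prod.mk.injEq x y a b ▸ h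
      subst h1; subst h2; exact hab.1
    · exact hmc (hs ▸ AddConGen.Rel.of _ _ h)
  have hmm' : m < m' := by
    refine lt_of_le_of_ne ?_ ?_
    · rw [← hs]; exact AddCon.addConGen_le.2 fun x y h => AddConGen.Rel.of _ _ (Finset.mem_insert_of_mem h)
    · intro heq
      exact hab.2 (heq ▸ AddConGen.Rel.of _ _ (Finset.mem_insert_self _ _) : m a b)
  exact hmax m' hm'T hmm'

section hom
variable {M : Type*} [AddCommMonoid M] {k : ℕ}

/-- The hom `ℕ^k →+ M` sending `eᵢ ↦ w i`. -/
def homOf (w : Fin k → M) : (Fin k → ℕ) →+ M where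
  toFun x := ∑ i, x i • w i
  map_zero' := by simp
  map_add' x y := by simp only [Pi.add_apply, add_nsmul, Finset.sum_add_distrib]

@[simp] theorem homOf_apply (w : Fin k → M) (x : Fin k → ℕ) :
    homOf w x = ∑ i, x i • w i := rfl

theorem homOf_single (w : Fin k → M) (i : Fin k) : homOf w (Pi.single i 1) = w i := by
  rw [homOf_apply, Finset.sum_eq_single i]
  · rw [Pi.single_eq_same, one_nsmul]
  · intro j _ hj; rw [Pi.single_eq_of_ne hj, zero_nsmul]
  · intro h; exact absurd (Finset.mem_univ i) h

theorem comp_homOf {T : Type*} [AddCommMonoid T] (f : M →+ T) (w : Fin k → M) :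
    f.comp (homOf w) = homOf (fun i => f (w i)) := by
  ext x
  simp [map_sum, map_nsmul]
end hom



/-- Every finitely generated commutative monoid `P` admits a coequalizer
presentation: there are `n₁ n₂ : ℕ`, homomorphisms `v₁ v₂ : ℕ^{n₂} →+ ℕ^{n₁}` and a surjective
homomorphism `q : ℕ^{n₁} →+ P` with `q ∘ v₁ = q ∘ v₂` which is the coequalizer of `v₁` and `v₂`
in commutative monoids, i.e. every `f : ℕ^{n₁} →+ T` with `f ∘ v₁ = f ∘ v₂` factors uniquely
through `q`. -/
theorem exists_coequalizer_presentation (P : Type) [AddCommMonoid P] (hfg : AddMonoid.FG P) :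
    ∃ (n₁ n₂ : ℕ) (v₁ v₂ : (Fin n₂ → ℕ) →+ (Fin n₁ → ℕ)) (q : (Fin n₁ → ℕ) →+ P),
      Function.Surjective q ∧
      q.comp v₁ = q.comp v₂ ∧
      ∀ (T : Type) [AddCommMonoid T] (f : (Fin n₁ → ℕ) →+ T),
        f.comp v₁ = f.comp v₂ → ∃! g : P →+ T, g.comp q = f := by
  obtain ⟨S, hS⟩ := hfg.fg_top
  set n₁ := S.card with hn₁
  set gens : Fin n₁ → P := fun i => (S.equivFin.symm i : P) with hgens
  set q : (Fin n₁ → ℕ) →+ P := homOf gens with hqdef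
  have hq : Function.Surjective q := by
    intro p
    have hp : p ∈ AddSubmonoid.closure (S : Set P) := by rw [hS]; trivial
    have hle : AddSubmonoid.closure (S : Set P) ≤ AddMonoidHom.mrange q := by
      rw [AddSubmonoid.closure_le]
      intro p hp
      exact ⟨Pi.single (S.equivFin ⟨p, hp⟩) 1, by
        rw [hqdef, homOf_single, hgens]; simp⟩
    exact hle hp
  set c : AddCon (Fin n₁ → ℕ) := AddCon.ker q with hc
  obtain ⟨s, hsgen⟩ := addCon_fg c
  set n₂ := s.card with hn₂
  set pe : Fin n₂ → ((Fin n₁ → ℕ) × (Fin n₁ → ℕ)) := fun i => (s.equivFin.symm i : _) with hpe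
  set v₁ : (Fin n₂ → ℕ) →+ (Fin n₁ → ℕ) := homOf (fun i => (pe i).1) with hv₁
  set v₂ : (Fin n₂ → ℕ) →+ (Fin n₁ → ℕ) := homOf (fun i => (pe i).2) with hv₂
  have hmem : ∀ i, c (pe i).1 (pe i).2 := by
    intro i
    rw [← hsgen]
    exact AddConGen.Rel.of _ _ (by rw [hpe]; exact (s.equivFin.symm i).2)
  refine ⟨n₁, n₂, v₁, v₂, q, hq, ?_, ?_⟩
  · rw [hv₁, hv₂, comp_homOf, comp_homOf]
    congr 1
    funext i
    exact AddCon.ker_rel q |>.1 (hmem i)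
  · intro T _ f hf
    have hfi : ∀ i, f (pe i).1 = f (pe i).2 := by
      intro i
      have h2 := DFunLike.congr_fun hf (Pi.single i 1)
      rw [AddMonoidHom.comp_apply, AddMonoidHom.comp_apply, hv₁, hv₂,
        homOf_single, homOf_single] at h2
      exact h2
    have hle : c ≤ AddCon.ker f := by
      rw [← hsgen]
      refine AddCon.addConGen_le.2 ?_
      intro x y hxy
      have : pe (s.equivFin ⟨(x, y), hxy⟩) = (x, y) := by
        rw [hpe]; simp
      have h := hfi (s.equivFin ⟨(x, y), hxy⟩)
      rw [this] at h
      exact (AddCon.ker_rel f).2 h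
    set e : c.Quotient ≃+ P := AddCon.quotientKerEquivOfSurjective q hq with he
    set g : P →+ T := (c.lift f hle).comp e.symm.toAddMonoidHom with hg
    have hesymm : ∀ x : Fin n₁ → ℕ, e.symm (q x) = (x : c.Quotient) := by
      intro x
      rw [AddEquiv.symm_apply_eq]
      rfl
    have hgq : g.comp q = f := by
      refine AddMonoidHom.ext fun x => ?_
      show (c.lift f hle) (e.symm (q x)) = f x
      rw [hesymm, AddCon.lift_coe]
    refine ⟨g, hgq, ?_⟩
    intro g' hg'
    refine AddMonoidHom.ext fun p => ?_
    obtain ⟨x, rfl⟩ := hq p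
    rw [← AddMonoidHom.comp_apply, hg', ← hgq, AddMonoidHom.comp_apply]
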